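/- arXiv:1809.10100 — 3 statements merged into one kernel-verified Lean document; each statement's English description precedes it below -/
import Mathlib

section
/- Let x ∈ ℂ^E satisfy Re(x_e) > 0 for all e ∈ E, and suppose the block D of the weighted Laplacian L(x) is invertible, so that the response matrix Λ(x) = A − B₀ D⁻¹ B₀ᵀ is defined. Then the real part of Λ(x) is positive semidefinite: uᵀ·Re(Λ(x))·u ≥ 0 for every real vector u ∈ ℝ^B. -/
open scoped BigOperators Classical

noncomputable section

namespace DirichletPaper

variable {V : Type*} [Fintype V] [DecidableEq V]

/-- `(Γ, B)` is a network: `Γ` is a connected finite simple graph, there are at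
least two boundary nodes, and no edge of `Γ` joins two boundary nodes. -/
structure IsNetwork (Γ : SimpleGraph V) (B : Finset V) : Prop where
  connected : Γ.Connected
  two_le_card : 2 ≤ B.card
  boundary_independent : ∀ i ∈ B, ∀ j ∈ B, ¬ Γ.Adj i j

/-- A crossing of the network `(Γ, B)`: the edge set of a simple path in `Γ`
whose two endpoints are distinct boundary nodes and all of whose internal
vertices are interior (i.e. lie in `V ∖ B`). -/
def IsCrossing (Γ : SimpleGraph V) (B : Finset V) (X : Finset (Sym2 V)) : Prop :=
  ∃ (i j : V) (p : Γ.Walk i j), p.IsPath ∧ i ∈ B ∧ j ∈ B ∧ i ≠ j ∧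
    (∀ v ∈ p.support, v ≠ i → v ≠ j → v ∉ B) ∧ X = p.edges.toFinset

/-- A grove of the network `(Γ, B)`: an acyclic edge set `F ⊆ E` such that every
interior vertex is incident to an edge of `F` and every connected component of
the forest `F` contains a boundary node. -/
def IsGrove (Γ : SimpleGraph V) (B : Finset V) (F : Finset (Sym2 V)) : Prop :=
  (F : Set (Sym2 V)) ⊆ Γ.edgeSet ∧
  (SimpleGraph.fromEdgeSet (F : Set (Sym2 V))).IsAcyclic ∧
  (∀ v : V, v ∉ B → ∃ e ∈ F, v ∈ e) ∧
  (∀ v : V, ∃ b ∈ B, (SimpleGraph.fromEdgeSet (F : Set (Sym2 V))).Reachable v b)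

/-- `Σ₁`: groves containing exactly one crossing. -/
def Sigma1 (Γ : SimpleGraph V) (B : Finset V) (F : Finset (Sym2 V)) : Prop :=
  IsGrove Γ B F ∧ ∃! C : Finset (Sym2 V), IsCrossing Γ B C ∧ C ⊆ F

/-- `Σ₀`: groves containing no crossing. -/
def Sigma0 (Γ : SimpleGraph V) (B : Finset V) (F : Finset (Sym2 V)) : Prop :=
  IsGrove Γ B F ∧ ∀ C : Finset (Sym2 V), IsCrossing Γ B C → ¬ C ⊆ F

/-- The generating function `∑_{F ∈ S} ∏_{e ∈ F} x_e`. -/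
def groveSum (R : Type*) [CommRing R] (S : Finset (Sym2 V) → Prop) (x : Sym2 V → R) : R :=
  ∑ F ∈ Finset.univ.filter S, ∏ e ∈ F, x e

/-- `P₀(x) = ∑_{F ∈ Σ₀} ∏_{e ∈ F} x_e`. -/
def P0 (R : Type*) [CommRing R] (Γ : SimpleGraph V) (B : Finset V) (x : Sym2 V → R) : R :=
  groveSum R (Sigma0 Γ B) x

/-- `P₁(x) = ∑_{F ∈ Σ₁} ∏_{e ∈ F} x_e`. -/
def P1 (R : Type*) [CommRing R] (Γ : SimpleGraph V) (B : Finset V) (x : Sym2 V → R) : R :=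
  groveSum R (Sigma1 Γ B) x

/-- The ground set `Ē = E ∪ {ê}` of the Dirichlet matroid, realized inside
`Option (Sym2 V)`, with `ê = none` and an edge `e` realized as `some e`. -/
def ground (Γ : SimpleGraph V) : Finset (Option (Sym2 V)) :=
  insert none ((Finset.univ.filter (· ∈ Γ.edgeSet)).image some)

/-- Independent sets of the Dirichlet matroid `M(N)`: subsets of `F` for some
`F ∈ Σ₁`, or subsets of `F ∪ {ê}` for some `F ∈ Σ₀`. -/
def Indep (Γ : SimpleGraph V) (B : Finset V) (X : Finset (Option (Sym2 V))) : Prop :=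
  (∃ F, Sigma1 Γ B F ∧ X ⊆ F.image some) ∨
  (∃ F, Sigma0 Γ B F ∧ X ⊆ insert none (F.image some))

/-- Bases of `M(N)`: maximal independent sets. -/
def IsBasis (Γ : SimpleGraph V) (B : Finset V) (X : Finset (Option (Sym2 V))) : Prop :=
  Indep Γ B X ∧ ∀ Y, Indep Γ B Y → X ⊆ Y → Y = X

/-- Circuits of `M(N)`: minimal dependent subsets of the ground set. -/
def IsCircuit (Γ : SimpleGraph V) (B : Finset V) (X : Finset (Option (Sym2 V))) : Prop :=
  X ⊆ ground Γ ∧ ¬ Indep Γ B X ∧ ∀ Y ⊂ X, Indep Γ B Y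

/-- The rank function of `M(N)`. -/
def rk (Γ : SimpleGraph V) (B : Finset V) (X : Finset (Option (Sym2 V))) : ℕ :=
  (X.powerset.filter (Indep Γ B)).sup Finset.card

/-- Independent sets of the graphic matroid of `G`: edge sets of forests. -/
def IndepG (G : SimpleGraph V) (X : Finset (Sym2 V)) : Prop :=
  (X : Set (Sym2 V)) ⊆ G.edgeSet ∧ (SimpleGraph.fromEdgeSet (X : Set (Sym2 V))).IsAcyclic

/-- Circuits of the graphic matroid of `G`. -/
def IsCircuitG (G : SimpleGraph V) (X : Finset (Sym2 V)) : Prop :=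
  (X : Set (Sym2 V)) ⊆ G.edgeSet ∧ ¬ IndepG G X ∧ ∀ Y ⊂ X, IndepG G Y

/-- The edge set of `G` as a `Finset`. -/
def edgeFinset' (G : SimpleGraph V) : Finset (Sym2 V) :=
  Finset.univ.filter (· ∈ G.edgeSet)

/-- The rank function of the graphic matroid of `G`. -/
def rkG (G : SimpleGraph V) (X : Finset (Sym2 V)) : ℕ :=
  (X.powerset.filter (IndepG G)).sup Finset.card

/-- The characteristic polynomial `χ(λ) = ∑_{X ⊆ S} (-1)^{|X|} λ^{r(S) - r(X)}`
of a matroid with ground set `S` and rank function `r`. -/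
def charPolyOf {α : Type*} [DecidableEq α] (S : Finset α) (r : Finset α → ℕ) : Polynomial ℤ :=
  ∑ X ∈ S.powerset, Polynomial.C ((-1 : ℤ) ^ X.card) * Polynomial.X ^ (r S - r X)

/-- The graph `Γ̂` obtained from `Γ` by adding an edge between each pair of
distinct boundary nodes. -/
def hatGraph (Γ : SimpleGraph V) (B : Finset V) : SimpleGraph V where
  Adj i j := Γ.Adj i j ∨ (i ∈ B ∧ j ∈ B ∧ i ≠ j)
  symm := by
    constructor
    intro i j h
    rcases h with h | ⟨hi, hj, hne⟩
    · exact Or.inl h.symm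
    · exact Or.inr ⟨hj, hi, hne.symm⟩
  loopless := by
    constructor
    intro i h
    rcases h with h | ⟨-, -, hne⟩
    · exact Γ.irrefl h
    · exact hne rfl

/-- The weighted Laplacian matrix of `Γ` with edge weights `x`. -/
def lap (Γ : SimpleGraph V) (x : Sym2 V → ℂ) : Matrix V V ℂ := fun i j =>
  if i = j then ∑ k ∈ Finset.univ.filter (fun k => Γ.Adj i k), x s(i, k)
  else if Γ.Adj i j then -x s(i, j) else 0

/-- The boundary-boundary block `A` of the Laplacian. -/
def lapA (Γ : SimpleGraph V) (B : Finset V) (x : Sym2 V → ℂ) :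
    Matrix {v : V // v ∈ B} {v : V // v ∈ B} ℂ :=
  (lap Γ x).submatrix Subtype.val Subtype.val

/-- The interior-interior block `D` of the Laplacian. -/
def lapD (Γ : SimpleGraph V) (B : Finset V) (x : Sym2 V → ℂ) :
    Matrix {v : V // v ∉ B} {v : V // v ∉ B} ℂ :=
  (lap Γ x).submatrix Subtype.val Subtype.val

/-- The boundary-interior block `B₀` of the Laplacian. -/
def lapB (Γ : SimpleGraph V) (B : Finset V) (x : Sym2 V → ℂ) :
    Matrix {v : V // v ∈ B} {v : V // v ∉ B} ℂ :=
  (lap Γ x).submatrix Subtype.val Subtype.val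

/-- The response matrix `Λ(x) = A - B₀ D⁻¹ B₀ᵀ` of the network. -/
def response (Γ : SimpleGraph V) (B : Finset V) (x : Sym2 V → ℂ) :
    Matrix {v : V // v ∈ B} {v : V // v ∈ B} ℂ :=
  lapA Γ B x - lapB Γ B x * (lapD Γ B x)⁻¹ * (lapB Γ B x).transpose

/-- `P₀` as a real multivariate polynomial in the variables `x_e`. -/
def P0mv (Γ : SimpleGraph V) (B : Finset V) : MvPolynomial (Sym2 V) ℝ :=
  ∑ F ∈ Finset.univ.filter (Sigma0 Γ B), ∏ e ∈ F, MvPolynomial.X e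

/-- `P₁` as a real multivariate polynomial in the variables `x_e`. -/
def P1mv (Γ : SimpleGraph V) (B : Finset V) : MvPolynomial (Sym2 V) ℝ :=
  ∑ F ∈ Finset.univ.filter (Sigma1 Γ B), ∏ e ∈ F, MvPolynomial.X e

/-- `E_{ef}(g, h) = ∂_e g · ∂_f h + ∂_f g · ∂_e h - g · ∂_e ∂_f h - ∂_e ∂_f g · h`. -/
def Emix {σ : Type*} (e f : σ) (g h : MvPolynomial σ ℝ) : MvPolynomial σ ℝ :=
  MvPolynomial.pderiv e g * MvPolynomial.pderiv f h +
    MvPolynomial.pderiv f g * MvPolynomial.pderiv e h -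
    g * MvPolynomial.pderiv e (MvPolynomial.pderiv f h) -
    MvPolynomial.pderiv e (MvPolynomial.pderiv f g) * h

/-- `Δ_{ef}(g) = ∂_e g · ∂_f g - g · ∂_e ∂_f g`, the Rayleigh difference. -/
def Delta {σ : Type*} (e f : σ) (g : MvPolynomial σ ℝ) : MvPolynomial σ ℝ :=
  MvPolynomial.pderiv e g * MvPolynomial.pderiv f g -
    g * MvPolynomial.pderiv e (MvPolynomial.pderiv f g)

/-- The block of the network containing the vertex `i`: all `j ∈ V` reachable
from `i` by a path all of whose vertices except possibly the final one are
interior. -/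
def blockOf (Γ : SimpleGraph V) (B : Finset V) (i : V) : Finset V :=
  Finset.univ.filter (fun j => ∃ p : Γ.Walk i j, p.IsPath ∧ ∀ v ∈ p.support, v ≠ j → v ∉ B)

lemma lap_symm (Γ : SimpleGraph V) (x : Sym2 V → ℂ) (i j : V) :
    lap Γ x i j = lap Γ x j i := by
  by_cases h : i = j
  · subst h; rfl
  · have h' : j ≠ i := fun hh => h hh.symm
    simp only [lap, if_neg h, if_neg h']
    by_cases ha : Γ.Adj i j
    · rw [if_pos ha, if_pos ha.symm, Sym2.eq_swap]
    · rw [if_neg ha, if_neg (fun hh => ha hh.symm)]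

lemma lap_mulVec (Γ : SimpleGraph V) (x : Sym2 V → ℂ) (φ : V → ℂ) (v : V) :
    (lap Γ x).mulVec φ v = ∑ j, (if Γ.Adj v j then x s(v, j) * (φ v - φ j) else 0) := by
  have hterm : ∀ j, lap Γ x v j * φ j =
      (if v = j then (∑ k ∈ Finset.univ.filter (fun k => Γ.Adj v k), x s(v, k)) * φ v else 0)
      + (if Γ.Adj v j then -(x s(v, j)) * φ j else 0) := by
    intro j
    by_cases h : v = j
    · subst h
      simp [lap, SimpleGraph.irrefl]
    · simp only [lap, if_neg h]
      by_cases ha : Γ.Adj v j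
      · simp [ha]
      · simp [ha]
  calc (lap Γ x).mulVec φ v = ∑ j, lap Γ x v j * φ j := rfl
    _ = ∑ j, ((if v = j then (∑ k ∈ Finset.univ.filter (fun k => Γ.Adj v k), x s(v, k)) * φ v else 0)
      + (if Γ.Adj v j then -(x s(v, j)) * φ j else 0)) := Finset.sum_congr rfl fun j _ => hterm j
    _ = (∑ k ∈ Finset.univ.filter (fun k => Γ.Adj v k), x s(v, k)) * φ v
        + ∑ j, (if Γ.Adj v j then -(x s(v, j)) * φ j else 0) := by
        rw [Finset.sum_add_distrib, Finset.sum_ite_eq]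
        simp
    _ = ∑ j, ((if Γ.Adj v j then x s(v, j) * φ v else 0)
        + (if Γ.Adj v j then -(x s(v, j)) * φ j else 0)) := by
        rw [Finset.sum_add_distrib]
        congr 1
        rw [Finset.sum_filter, Finset.sum_mul]
        exact Finset.sum_congr rfl fun j _ => by
          by_cases ha : Γ.Adj v j <;> simp [ha]
    _ = ∑ j, (if Γ.Adj v j then x s(v, j) * (φ v - φ j) else 0) :=
        Finset.sum_congr rfl fun j _ => by
          by_cases ha : Γ.Adj v j
          · simp [ha]; ring
          · simp [ha]

lemma sum_split_boundary (B : Finset V) (g : V → ℂ) :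
    ∑ j, g j = (∑ i : {v : V // v ∈ B}, g i.val) + (∑ i : {v : V // v ∉ B}, g i.val) := by
  rw [← Finset.sum_filter_add_sum_filter_not Finset.univ (· ∈ B) g]
  congr 1
  · exact Finset.sum_subtype _ (by simp) _
  · exact Finset.sum_subtype _ (by simp) _
/-- **The real part of the response matrix is positive semidefinite**: if
`Re x_e > 0` for all edges `e` and the interior block `D` of the weighted
Laplacian is invertible, then `uᵀ · Re(Λ(x)) · u ≥ 0` for every real vector
`u ∈ ℝ^B`. -/
theorem response_re_posSemidef
    (Γ : SimpleGraph V) (B : Finset V) (hN : IsNetwork Γ B)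
    (x : Sym2 V → ℂ) (hx : ∀ e ∈ Γ.edgeSet, 0 < (x e).re)
    (hD : IsUnit (lapD Γ B x).det)
    (u : {v : V // v ∈ B} → ℝ) :
    0 ≤ ∑ i, ∑ j, u i * (response Γ B x i j).re * u j := by
  classical
  set uC : {v : V // v ∈ B} → ℂ := fun i => (u i : ℂ) with huC
  set y : {v : V // v ∉ B} → ℂ := (lapB Γ B x).transpose.mulVec uC with hy
  set w : {v : V // v ∉ B} → ℂ := -((lapD Γ B x)⁻¹.mulVec y) with hw
  set φ : V → ℂ := fun v => if h : v ∈ B then uC ⟨v, h⟩ else w ⟨v, h⟩ with hφ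
  have hφB : ∀ (i : {v : V // v ∈ B}), φ i.val = uC i := by
    intro i; simp only [hφ]; rw [dif_pos i.2]
  have hφI : ∀ (i : {v : V // v ∉ B}), φ i.val = w i := by
    intro i; simp only [hφ]; rw [dif_neg i.2]
  -- decomposition of L φ
  have hLφ : ∀ v, (lap Γ x).mulVec φ v =
      (∑ i : {v : V // v ∈ B}, lap Γ x v i * uC i) +
      (∑ i : {v : V // v ∉ B}, lap Γ x v i * w i) := by
    intro v
    have h0 : (lap Γ x).mulVec φ v = ∑ j, lap Γ x v j * φ j := rfl
    rw [h0, sum_split_boundary B (fun j => lap Γ x v j * φ j)]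
    congr 1
    · exact Finset.sum_congr rfl fun i _ => by rw [hφB i]
    · exact Finset.sum_congr rfl fun i _ => by rw [hφI i]
  -- interior rows vanish
  have hint : ∀ (v : V), v ∉ B → (lap Γ x).mulVec φ v = 0 := by
    intro v h
    rw [hLφ v]
    have h1 : (∑ i : {v : V // v ∈ B}, lap Γ x v i * uC i) = y ⟨v, h⟩ := by
      have h1' : y ⟨v, h⟩ = ∑ i : {v : V // v ∈ B}, lap Γ x (i : V) v * uC i := by
        simp [hy, Matrix.mulVec, dotProduct, lapB]
      rw [h1']
      exact Finset.sum_congr rfl fun i _ => by rw [lap_symm]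
    have h2 : (∑ i : {v : V // v ∉ B}, lap Γ x v i * w i) = (lapD Γ B x).mulVec w ⟨v, h⟩ := by
      simp [lapD, Matrix.mulVec, dotProduct]
    have h3 : (lapD Γ B x).mulVec w = -y := by
      rw [hw, Matrix.mulVec_neg, Matrix.mulVec_mulVec, Matrix.mul_nonsing_inv _ hD,
        Matrix.one_mulVec]
    rw [h1, h2, h3]
    simp
  -- boundary rows give the response matrix
  have hbd : ∀ (v : V) (h : v ∈ B),
      (lap Γ x).mulVec φ v = (response Γ B x).mulVec uC ⟨v, h⟩ := by
    intro v h
    rw [hLφ v]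
    have h1 : (∑ i : {v : V // v ∈ B}, lap Γ x v i * uC i) = (lapA Γ B x).mulVec uC ⟨v, h⟩ := by
      simp [lapA, Matrix.mulVec, dotProduct]
    have h2 : (∑ i : {v : V // v ∉ B}, lap Γ x v i * w i) = (lapB Γ B x).mulVec w ⟨v, h⟩ := by
      simp [lapB, Matrix.mulVec, dotProduct]
    have h3 : (response Γ B x).mulVec uC = (lapA Γ B x).mulVec uC + (lapB Γ B x).mulVec w := by
      rw [response, Matrix.sub_mulVec, hw, Matrix.mulVec_neg, sub_eq_add_neg, hy,
        Matrix.mulVec_mulVec, Matrix.mulVec_mulVec]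
    rw [h1, h2, h3]
    simp
  -- the quadratic form equals the conjugate-symmetric sum
  have hS : dotProduct uC ((response Γ B x).mulVec uC) =
      ∑ v, (starRingEnd ℂ) (φ v) * (lap Γ x).mulVec φ v := by
    rw [sum_split_boundary B (fun v => (starRingEnd ℂ) (φ v) * (lap Γ x).mulVec φ v)]
    have hI : (∑ i : {v : V // v ∉ B},
        (starRingEnd ℂ) (φ i.val) * (lap Γ x).mulVec φ i.val) = 0 := by
      apply Finset.sum_eq_zero
      intro i _
      rw [hint i.val i.2, mul_zero]
    rw [hI, add_zero, dotProduct]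
    apply Finset.sum_congr rfl
    intro i _
    rw [hφB i, hbd i.val i.2, huC]
    simp [Complex.conj_ofReal]
  -- rewrite as a sum over directed edges
  have hS2 : (∑ v, (starRingEnd ℂ) (φ v) * (lap Γ x).mulVec φ v) =
      ∑ v, ∑ j, (if Γ.Adj v j then x s(v, j) * ((starRingEnd ℂ) (φ v) * (φ v - φ j)) else 0) := by
    apply Finset.sum_congr rfl
    intro v _
    rw [lap_mulVec, Finset.mul_sum]
    apply Finset.sum_congr rfl
    intro j _
    by_cases ha : Γ.Adj v j
    · simp only [if_pos ha]; ring
    · simp [ha]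
  set Q : ℂ := ∑ v, ∑ j,
      (if Γ.Adj v j then x s(v, j) * ((starRingEnd ℂ) (φ v) * (φ v - φ j)) else 0) with hQ
  have hswap : Q = ∑ v, ∑ j,
      (if Γ.Adj v j then x s(v, j) * ((starRingEnd ℂ) (φ j) * (φ j - φ v)) else 0) := by
    rw [hQ, Finset.sum_comm]
    apply Finset.sum_congr rfl
    intro v _
    apply Finset.sum_congr rfl
    intro j _
    by_cases ha : Γ.Adj v j
    · rw [if_pos ha.symm, if_pos ha, Sym2.eq_swap]
    · rw [if_neg (fun hh => ha hh.symm), if_neg ha]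
  have hdouble : Q + Q = ∑ v, ∑ j,
      (if Γ.Adj v j then x s(v, j) * (Complex.normSq (φ v - φ j) : ℂ) else 0) := by
    nth_rewrite 2 [hswap]
    rw [hQ, ← Finset.sum_add_distrib]
    apply Finset.sum_congr rfl
    intro v _
    rw [← Finset.sum_add_distrib]
    apply Finset.sum_congr rfl
    intro j _
    by_cases ha : Γ.Adj v j
    · simp only [if_pos ha]
      have hconj : ((Complex.normSq (φ v - φ j) : ℂ)) =
          (starRingEnd ℂ) (φ v - φ j) * (φ v - φ j) := by
        rw [mul_comm, Complex.mul_conj]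
      rw [hconj, map_sub]
      ring
    · simp [ha]
  have hQre : 0 ≤ Q.re := by
    have hre : 0 ≤ (Q + Q).re := by
      rw [hdouble, Complex.re_sum]
      apply Finset.sum_nonneg
      intro v _
      rw [Complex.re_sum]
      apply Finset.sum_nonneg
      intro j _
      by_cases ha : Γ.Adj v j
      · simp only [if_pos ha]
        have hxe : 0 < (x s(v, j)).re := hx _ ha
        have : (x s(v, j) * (Complex.normSq (φ v - φ j) : ℂ)).re =
            (x s(v, j)).re * Complex.normSq (φ v - φ j) := by
          simp [Complex.mul_re]
        rw [this]
        exact mul_nonneg hxe.le (Complex.normSq_nonneg _)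
      · simp [ha]
    rw [Complex.add_re] at hre
    linarith
  -- the target equals Q.re
  have htarget : (∑ i, ∑ j, u i * (response Γ B x i j).re * u j) =
      (dotProduct uC ((response Γ B x).mulVec uC)).re := by
    rw [dotProduct, Complex.re_sum]
    apply Finset.sum_congr rfl
    intro i _
    rw [Matrix.mulVec, dotProduct, Finset.mul_sum, Complex.re_sum]
    apply Finset.sum_congr rfl
    intro j _
    simp only [huC, Complex.mul_re, Complex.ofReal_re, Complex.ofReal_im]
    ring
  rw [htarget, hS, hS2]
  exact hQre
end DirichletPaper
end
end

section
/- Bases of the Dirichlet matroid: a set X ⊆ Ē is a basis (i.e., a maximal independent set) of M(N) if and only if either X ∈ Σ₁, or X = F ∪ {ê} for some F ∈ Σ₀. -/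
open scoped BigOperators Classical

noncomputable section

namespace DirichletPaper

variable {V : Type*} [Fintype V] [DecidableEq V]

set_option linter.unusedSectionVars false

open SimpleGraph in
lemma exists_path_to_boundary {H : SimpleGraph V} {B : Finset V} {a c : V}
    (p : H.Walk a c) (hc : c ∈ B) :
    ∃ i ∈ B, ∃ q : H.Walk a i, q.IsPath ∧ ∀ v ∈ q.support, v ≠ i → v ∉ B := by
  induction p with
  | nil => exact ⟨_, hc, .nil, by simp, by simp⟩
  | @cons u v w h q ih =>
    by_cases hu : u ∈ B
    · exact ⟨u, hu, .nil, by simp, by simp⟩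
    · obtain ⟨i, hiB, r, hr, hint⟩ := ih hc
      refine ⟨i, hiB, (Walk.cons h r).bypass, Walk.bypass_isPath _, ?_⟩
      intro x hx hxi
      have hx' := Walk.support_bypass_subset _ hx
      simp only [Walk.support_cons, List.mem_cons] at hx'
      rcases hx' with rfl | hx'
      · exact hu
      · exact hint x hx' hxi

open SimpleGraph in
lemma reachable_of_mem_support' {H : SimpleGraph V} {a c v : V} (p : H.Walk a c)
    (hv : v ∈ p.support) : H.Reachable a v :=
  ⟨p.takeUntil v hv⟩

open SimpleGraph in
/-- Main lemma: adding to a grove `F` an extra edge `e` (keeping acyclicity) creates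
a crossing through `e`. -/
lemma exists_crossing_of_extra_edge (Γ : SimpleGraph V) (B : Finset V)
    {F : Finset (Sym2 V)} (hF : IsGrove Γ B F)
    {G : Finset (Sym2 V)} (hGE : (G : Set (Sym2 V)) ⊆ Γ.edgeSet)
    (hGacyc : (fromEdgeSet (G : Set (Sym2 V))).IsAcyclic)
    (hFG : F ⊆ G) {e : Sym2 V} (heG : e ∈ G) (heF : e ∉ F) :
    ∃ C, IsCrossing Γ B C ∧ C ⊆ insert e F ∧ e ∈ C := by
  obtain ⟨hFE, hFacyc, -, hreach⟩ := hF
  induction e using Sym2.ind with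
  | _ a b =>
  have hab : Γ.Adj a b := hGE heG
  have hne : a ≠ b := hab.ne
  set H : SimpleGraph V := fromEdgeSet (F : Set (Sym2 V)) with hH
  have hHG : H ≤ fromEdgeSet (G : Set (Sym2 V)) := fromEdgeSet_mono (by exact_mod_cast hFG)
  -- a and b are in different components of H
  have hnr : ¬ H.Reachable a b := by
    intro hr
    obtain ⟨p⟩ := hr
    have hp := p.bypass_isPath
    set q := p.bypass with hq
    have hqe : ∀ e' ∈ q.edges, e' ∈ (fromEdgeSet (G : Set (Sym2 V))).edgeSet :=
      fun e' he' => (edgeSet_mono hHG) (q.edges_subset_edgeSet he')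
    have hadj : (fromEdgeSet (G : Set (Sym2 V))).Adj b a := by
      rw [fromEdgeSet_adj]
      exact ⟨by rwa [Sym2.eq_swap], hne.symm⟩
    have hcyc : (Walk.cons hadj (q.transfer _ hqe)).IsCycle := by
      rw [Walk.cons_isCycle_iff]
      refine ⟨hp.transfer hqe, ?_⟩
      rw [Walk.edges_transfer]
      intro hmem
      have h2 : s(b, a) ∈ (F : Set (Sym2 V)) := by
        have := q.edges_subset_edgeSet hmem
        rw [edgeSet_fromEdgeSet] at this
        exact this.1
      rw [Sym2.eq_swap] at h2
      exact heF (by exact_mod_cast h2)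
    exact hGacyc _ hcyc
  -- paths to the boundary
  obtain ⟨ba, hbaB, hra⟩ := hreach a
  obtain ⟨p0⟩ := hra
  obtain ⟨i, hiB, p, hp, hpint⟩ := exists_path_to_boundary p0 hbaB
  obtain ⟨bb, hbbB, hrb⟩ := hreach b
  obtain ⟨q0⟩ := hrb
  obtain ⟨j, hjB, q, hq, hqint⟩ := exists_path_to_boundary q0 hbbB
  have hdisj : ∀ v ∈ p.support, v ∉ q.support := by
    intro v hvp hvq
    exact hnr ((reachable_of_mem_support' p hvp).trans
      (reachable_of_mem_support' q hvq).symm)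
  have hij : i ≠ j := by
    rintro rfl
    exact hdisj i p.end_mem_support q.end_mem_support
  -- build the crossing walk in fromEdgeSet (insert e F)
  set s : Set (Sym2 V) := ((insert s(a,b) F : Finset (Sym2 V)) : Set (Sym2 V)) with hs
  have hHs : H ≤ fromEdgeSet s := by
    apply fromEdgeSet_mono
    intro x hx
    simp only [hs, Finset.coe_insert, Set.mem_insert_iff]
    exact Or.inr hx
  have hpe : ∀ e' ∈ p.edges, e' ∈ (fromEdgeSet s).edgeSet :=
    fun e' he' => (edgeSet_mono hHs) (p.edges_subset_edgeSet he')
  have hqe : ∀ e' ∈ q.edges, e' ∈ (fromEdgeSet s).edgeSet :=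
    fun e' he' => (edgeSet_mono hHs) (q.edges_subset_edgeSet he')
  have hadj : (fromEdgeSet s).Adj a b := by
    rw [fromEdgeSet_adj]
    exact ⟨by simp [hs], hne⟩
  set w : (fromEdgeSet s).Walk i j :=
    (p.transfer _ hpe).reverse.append (Walk.cons hadj (q.transfer _ hqe)) with hw
  have hwsupp : w.support = p.support.reverse ++ q.support := by
    rw [hw, Walk.support_append, Walk.support_reverse, Walk.support_transfer]
    congr 1
    rw [Walk.support_cons, List.tail_cons, Walk.support_transfer]
  have hwpath : w.IsPath := by
    rw [Walk.isPath_def, hwsupp]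
    refine List.Nodup.append (List.nodup_reverse.mpr (Walk.isPath_def _ |>.mp hp))
      (Walk.isPath_def _ |>.mp hq) ?_
    intro v hv1 hv2
    exact hdisj v (List.mem_reverse.mp hv1) hv2
  -- transfer to Γ
  have hsE : s ⊆ Γ.edgeSet := by
    intro x hx
    simp only [hs, Finset.coe_insert, Set.mem_insert_iff] at hx
    rcases hx with rfl | hx
    · exact hab
    · exact hFE hx
  have hwe : ∀ e' ∈ w.edges, e' ∈ Γ.edgeSet := by
    intro e' he'
    have := w.edges_subset_edgeSet he'
    rw [edgeSet_fromEdgeSet] at this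
    exact hsE this.1
  set wΓ : Γ.Walk i j := w.transfer Γ hwe with hwΓ
  refine ⟨wΓ.edges.toFinset, ⟨i, j, wΓ, hwpath.transfer hwe, hiB, hjB, hij, ?_, rfl⟩, ?_, ?_⟩
  · intro v hv hvi hvj
    rw [hwΓ, Walk.support_transfer, hwsupp, List.mem_append, List.mem_reverse] at hv
    rcases hv with hv | hv
    · exact hpint v hv hvi
    · exact hqint v hv hvj
  · intro x hx
    rw [List.mem_toFinset, hwΓ, Walk.edges_transfer] at hx
    have := w.edges_subset_edgeSet hx
    rw [edgeSet_fromEdgeSet] at this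
    exact_mod_cast this.1
  · rw [List.mem_toFinset, hwΓ, Walk.edges_transfer, hw, Walk.edges_append]
    rw [List.mem_append]
    right
    rw [Walk.edges_cons]
    exact List.mem_cons_self


lemma sigma0_subset_eq (Γ : SimpleGraph V) (B : Finset V) {F G : Finset (Sym2 V)}
    (hF : Sigma0 Γ B F) (hG : Sigma0 Γ B G) (hFG : F ⊆ G) : F = G := by
  by_contra h
  obtain ⟨e, heG, heF⟩ := Finset.exists_of_ssubset (lt_of_le_of_ne hFG h)
  obtain ⟨C, hC, hCsub, -⟩ :=
    exists_crossing_of_extra_edge Γ B hF.1 hG.1.1 hG.1.2.1 hFG heG heF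
  exact hG.2 C hC (hCsub.trans (Finset.insert_subset heG hFG))

lemma sigma1_subset_eq (Γ : SimpleGraph V) (B : Finset V) {F G : Finset (Sym2 V)}
    (hF : Sigma1 Γ B F) (hG : Sigma1 Γ B G) (hFG : F ⊆ G) : F = G := by
  by_contra h
  obtain ⟨e, heG, heF⟩ := Finset.exists_of_ssubset (lt_of_le_of_ne hFG h)
  obtain ⟨C, hC, hCsub, heC⟩ :=
    exists_crossing_of_extra_edge Γ B hF.1 hG.1.1 hG.1.2.1 hFG heG heF
  obtain ⟨Cg, -, huniq⟩ := hG.2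
  obtain ⟨Cf, ⟨hCf, hCfF⟩, -⟩ := hF.2
  have h1 : C = Cg := huniq C ⟨hC, hCsub.trans (Finset.insert_subset heG hFG)⟩
  have h2 : Cf = Cg := huniq Cf ⟨hCf, hCfF.trans hFG⟩
  exact heF (hCfF (h2 ▸ h1 ▸ heC))

lemma sigma1_not_subset_sigma0 (Γ : SimpleGraph V) (B : Finset V) {F G : Finset (Sym2 V)}
    (hF : Sigma1 Γ B F) (hG : Sigma0 Γ B G) (hFG : F ⊆ G) : False := by
  obtain ⟨C, ⟨hC, hCF⟩, -⟩ := hF.2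
  exact hG.2 C hC (hCF.trans hFG)

lemma subset_of_image_some_subset {F G : Finset (Sym2 V)}
    (h : F.image some ⊆ insert none (G.image some)) : F ⊆ G := by
  intro x hx
  have := h (Finset.mem_image_of_mem some hx)
  simpa using this

/-- **Bases of the Dirichlet matroid**: a set `X ⊆ Ē` is a basis (maximal
independent set) of `M(N)` iff `X ∈ Σ₁` or `X = F ∪ {ê}` for some `F ∈ Σ₀`. -/
theorem basis_characterization
    (Γ : SimpleGraph V) (B : Finset V) (hN : IsNetwork Γ B)
    (X : Finset (Option (Sym2 V))) (hX : X ⊆ ground Γ) :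
    IsBasis Γ B X ↔
      ((∃ F, Sigma1 Γ B F ∧ X = F.image some) ∨
       (∃ F, Sigma0 Γ B F ∧ X = insert none (F.image some))) := by
  constructor
  · rintro ⟨hI, hmax⟩
    rcases hI with ⟨F, hF, hsub⟩ | ⟨F, hF, hsub⟩
    · exact Or.inl ⟨F, hF, (hmax _ (Or.inl ⟨F, hF, Finset.Subset.refl _⟩) hsub).symm⟩
    · exact Or.inr ⟨F, hF, (hmax _ (Or.inr ⟨F, hF, Finset.Subset.refl _⟩) hsub).symm⟩
  · rintro (⟨F, hF, rfl⟩ | ⟨F, hF, rfl⟩)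
    · refine ⟨Or.inl ⟨F, hF, Finset.Subset.refl _⟩, ?_⟩
      intro Y hY hXY
      rcases hY with ⟨G, hG, hYsub⟩ | ⟨G, hG, hYsub⟩
      · have hFG : F ⊆ G := subset_of_image_some_subset
          ((hXY.trans hYsub).trans (Finset.subset_insert _ _))
        have : F = G := sigma1_subset_eq Γ B hF hG hFG
        subst this
        exact Finset.Subset.antisymm hYsub hXY
      · have hFG : F ⊆ G := subset_of_image_some_subset (hXY.trans hYsub)
        exact absurd (sigma1_not_subset_sigma0 Γ B hF hG hFG) not_false
    · refine ⟨Or.inr ⟨F, hF, Finset.Subset.refl _⟩, ?_⟩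
      intro Y hY hXY
      rcases hY with ⟨G, hG, hYsub⟩ | ⟨G, hG, hYsub⟩
      · have : (none : Option (Sym2 V)) ∈ G.image some :=
          hYsub (hXY (Finset.mem_insert_self _ _))
        simp at this
      · have hFG : F ⊆ G := subset_of_image_some_subset
          (((Finset.subset_insert _ _).trans hXY).trans hYsub)
        have : F = G := sigma0_subset_eq Γ B hF hG hFG
        subst this
        exact Finset.Subset.antisymm hYsub hXY
end DirichletPaper
end
end

section
/- If |B| = 2, then the Dirichlet matroid M(N) is isomorphic to the graphic matroid M(Γ̂), where Γ̂ is the graph obtained from Γ by adding a single edge ē between the two boundary nodes. Explicitly, the bijection Ē → E(Γ̂) fixing every edge of E and sending ê to ē is a matroid isomorphism: a set X ⊆ Ē is independent in M(N) if and only if its image in E(Γ̂) is the edge set of a forest in Γ̂. -/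
open scoped BigOperators Classical

noncomputable section

namespace DirichletPaper

variable {V : Type*} [Fintype V] [DecidableEq V]

section Helpers

open SimpleGraph

/-- A subset of an acyclic edge set is acyclic. -/
lemma acyclic_mono' {S T : Set (Sym2 V)} (h : S ⊆ T)
    (hT : (SimpleGraph.fromEdgeSet T).IsAcyclic) :
    (SimpleGraph.fromEdgeSet S).IsAcyclic := by
  intro v c hc
  have hsub : ∀ e ∈ c.edges, e ∈ (SimpleGraph.fromEdgeSet T).edgeSet := by
    intro e he
    have h1 := c.edges_subset_edgeSet he
    rw [SimpleGraph.edgeSet_fromEdgeSet] at h1 ⊢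
    exact ⟨h h1.1, h1.2⟩
  exact hT (c.transfer _ hsub) (hc.transfer hsub)

/-- Adding an edge between two vertices in different components of a forest
keeps it acyclic. -/
lemma acyclic_insert' {F : Set (Sym2 V)} {a b : V}
    (hF : (SimpleGraph.fromEdgeSet F).IsAcyclic)
    (hr : ¬ (SimpleGraph.fromEdgeSet F).Reachable a b) :
    (SimpleGraph.fromEdgeSet (insert s(a, b) F)).IsAcyclic := by
  have hab : a ≠ b := by rintro rfl; exact hr (SimpleGraph.Reachable.refl a)
  intro v c hc
  by_cases he : s(a, b) ∈ c.edges
  · have hcyc : ∃ (u : V) (p : (SimpleGraph.fromEdgeSet (insert s(a, b) F)).Walk u u),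
        p.IsCycle ∧ s(a, b) ∈ p.edges := ⟨v, c, hc, he⟩
    have h2 := (SimpleGraph.adj_and_reachable_delete_edges_iff_exists_cycle.mpr hcyc).2
    apply hr
    refine h2.mono ?_
    intro x y hxy
    rw [SimpleGraph.deleteEdges_adj, SimpleGraph.fromEdgeSet_adj] at hxy
    obtain ⟨⟨hmem, hxyne⟩, hnot⟩ := hxy
    rw [SimpleGraph.fromEdgeSet_adj]
    refine ⟨?_, hxyne⟩
    rcases Set.mem_insert_iff.mp hmem with h | h
    · exact absurd (Set.mem_singleton_iff.mpr h) hnot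
    · exact h
  · have hsub : ∀ e ∈ c.edges, e ∈ (SimpleGraph.fromEdgeSet F).edgeSet := by
      intro e hec
      have h1 := c.edges_subset_edgeSet hec
      rw [SimpleGraph.edgeSet_fromEdgeSet] at h1 ⊢
      refine ⟨?_, h1.2⟩
      rcases Set.mem_insert_iff.mp h1.1 with h | h
      · exact absurd (h ▸ hec) he
      · exact h
    exact hF (c.transfer _ hsub) (hc.transfer hsub)

/-- Every edge set acyclic subset of the edges of a graph extends to a maximal one. -/
lemma exists_maximal_acyclic' (G : SimpleGraph V) (Y : Finset (Sym2 V))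
    (hY : (Y : Set (Sym2 V)) ⊆ G.edgeSet)
    (hacY : (SimpleGraph.fromEdgeSet (Y : Set (Sym2 V))).IsAcyclic) :
    ∃ T : Finset (Sym2 V), Y ⊆ T ∧ (T : Set (Sym2 V)) ⊆ G.edgeSet ∧
      (SimpleGraph.fromEdgeSet (T : Set (Sym2 V))).IsAcyclic ∧
      ∀ e ∈ G.edgeSet, e ∉ T →
        ¬ (SimpleGraph.fromEdgeSet ((insert e T : Finset (Sym2 V)) : Set (Sym2 V))).IsAcyclic := by
  classical
  set 𝒮 : Finset (Finset (Sym2 V)) :=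
    (Finset.univ.filter (· ∈ G.edgeSet)).powerset.filter
      (fun T => Y ⊆ T ∧ (SimpleGraph.fromEdgeSet (T : Set (Sym2 V))).IsAcyclic) with h𝒮
  have hYmem : Y ∈ 𝒮 := by
    rw [h𝒮, Finset.mem_filter, Finset.mem_powerset]
    exact ⟨fun e he => Finset.mem_filter.mpr ⟨Finset.mem_univ _, hY he⟩,
      subset_refl _, hacY⟩
  obtain ⟨T, hT𝒮, hTmax⟩ := Finset.exists_max_image 𝒮 Finset.card ⟨Y, hYmem⟩
  rw [h𝒮, Finset.mem_filter, Finset.mem_powerset] at hT𝒮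
  obtain ⟨hTsub, hYT, hTac⟩ := hT𝒮
  refine ⟨T, hYT, fun e he => (Finset.mem_filter.mp (hTsub he)).2, hTac, ?_⟩
  intro e heG heT hins
  have hmem : insert e T ∈ 𝒮 := by
    rw [h𝒮, Finset.mem_filter, Finset.mem_powerset]
    refine ⟨?_, hYT.trans (Finset.subset_insert _ _), hins⟩
    intro f hf
    rcases Finset.mem_insert.mp hf with rfl | hf
    · exact Finset.mem_filter.mpr ⟨Finset.mem_univ _, heG⟩
    · exact hTsub hf
  have := hTmax _ hmem
  rw [Finset.card_insert_of_notMem heT] at this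
  omega

/-- In a connected graph, a maximal acyclic edge set is spanning. -/
lemma maximal_acyclic_reachable' {G : SimpleGraph V} (hG : G.Preconnected)
    {T : Finset (Sym2 V)}
    (hac : (SimpleGraph.fromEdgeSet (T : Set (Sym2 V))).IsAcyclic)
    (hmax : ∀ e ∈ G.edgeSet, e ∉ T →
      ¬ (SimpleGraph.fromEdgeSet ((insert e T : Finset (Sym2 V)) : Set (Sym2 V))).IsAcyclic) :
    ∀ u v : V, (SimpleGraph.fromEdgeSet (T : Set (Sym2 V))).Reachable u v := by
  have key : ∀ {a b : V}, G.Adj a b →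
      (SimpleGraph.fromEdgeSet (T : Set (Sym2 V))).Reachable a b := by
    intro a b hab
    by_cases h : s(a, b) ∈ T
    · exact ((SimpleGraph.fromEdgeSet_adj _).mpr ⟨by exact_mod_cast h, hab.ne⟩).reachable
    · by_contra hr
      apply hmax _ (G.mem_edgeSet.mpr hab) h
      have : ((insert s(a,b) T : Finset (Sym2 V)) : Set (Sym2 V))
          = insert s(a,b) (T : Set (Sym2 V)) := by
        simp
      rw [this]
      exact acyclic_insert' hac hr
  intro u v
  obtain ⟨p⟩ := hG u v
  induction p with
  | nil => exact SimpleGraph.Reachable.refl _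
  | cons h q ih => exact (key h).trans ih

/-- A vertex reachable to a distinct vertex in `fromEdgeSet F` is incident to
an edge of `F`. -/
lemma exists_incident' {F : Finset (Sym2 V)} {v b : V} (hvb : v ≠ b)
    (hr : (SimpleGraph.fromEdgeSet (F : Set (Sym2 V))).Reachable v b) :
    ∃ e ∈ F, v ∈ e := by
  obtain ⟨p⟩ := hr
  cases p with
  | nil => exact absurd rfl hvb
  | @cons _ w _ h q =>
    refine ⟨s(v, w), ?_, Sym2.mem_mk_left _ _⟩
    have := ((SimpleGraph.fromEdgeSet_adj _).mp h).1
    exact_mod_cast this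

/-- Normalize a crossing (when `B = {b₁, b₂}`) to a path from `b₁` to `b₂`. -/
lemma crossing_edges' {Γ : SimpleGraph V} {B : Finset V} {b₁ b₂ : V}
    (hBeq : B = {b₁, b₂}) {C : Finset (Sym2 V)} (hC : IsCrossing Γ B C) :
    ∃ p : Γ.Walk b₁ b₂, p.IsPath ∧ C = p.edges.toFinset := by
  obtain ⟨i, j, p, hp, hi, hj, hij, -, rfl⟩ := hC
  subst hBeq
  simp only [Finset.mem_insert, Finset.mem_singleton] at hi hj
  rcases hi with rfl | rfl <;> rcases hj with rfl | rfl
  · exact absurd rfl hij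
  · exact ⟨p, hp, rfl⟩
  · exact ⟨p.reverse, hp.reverse, by
      simp [SimpleGraph.Walk.edges_reverse]⟩
  · exact absurd rfl hij

/-- A path from `b₁` to `b₂` in `fromEdgeSet F` yields a crossing contained in
`F`, when `B = {b₁, b₂}` and `F ⊆ E(Γ)`. -/
lemma crossing_of_reachable' {Γ : SimpleGraph V} {B : Finset V} {b₁ b₂ : V}
    (hBeq : B = {b₁, b₂}) (hne : b₁ ≠ b₂) (hb₁ : b₁ ∈ B) (hb₂ : b₂ ∈ B)
    {F : Finset (Sym2 V)} (hFE : (F : Set (Sym2 V)) ⊆ Γ.edgeSet)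
    (hr : (SimpleGraph.fromEdgeSet (F : Set (Sym2 V))).Reachable b₁ b₂) :
    ∃ C : Finset (Sym2 V), IsCrossing Γ B C ∧ C ⊆ F := by
  obtain ⟨w⟩ := hr
  obtain ⟨p, hp⟩ := w.toPath
  have hedges : ∀ e ∈ p.edges, e ∈ Γ.edgeSet := by
    intro e he
    have h1 := p.edges_subset_edgeSet he
    rw [SimpleGraph.edgeSet_fromEdgeSet] at h1
    exact hFE h1.1
  set q := p.transfer Γ hedges with hq
  have hqp : q.IsPath := hp.transfer hedges
  refine ⟨q.edges.toFinset, ⟨b₁, b₂, q, hqp, hb₁, hb₂, hne, ?_, rfl⟩, ?_⟩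
  · intro v _ hv1 hv2
    subst hBeq
    simp only [Finset.mem_insert, Finset.mem_singleton]
    push_neg
    exact ⟨hv1, hv2⟩
  · intro e he
    rw [List.mem_toFinset, hq, SimpleGraph.Walk.edges_transfer] at he
    have h1 := p.edges_subset_edgeSet he
    rw [SimpleGraph.edgeSet_fromEdgeSet] at h1
    exact_mod_cast h1.1

/-- Paths in `Γ` between `b₁` and `b₂` with edges in an acyclic set `T` have
the same edge set. -/
lemma path_edges_unique' {Γ : SimpleGraph V} {T : Finset (Sym2 V)} {b₁ b₂ : V}
    (hac : (SimpleGraph.fromEdgeSet (T : Set (Sym2 V))).IsAcyclic)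
    {p q : Γ.Walk b₁ b₂} (hp : p.IsPath) (hq : q.IsPath)
    (hpT : ∀ e ∈ p.edges, e ∈ T) (hqT : ∀ e ∈ q.edges, e ∈ T) :
    p.edges.toFinset = q.edges.toFinset := by
  have hpe : ∀ e ∈ p.edges, e ∈ (SimpleGraph.fromEdgeSet (T : Set (Sym2 V))).edgeSet := by
    intro e he
    rw [SimpleGraph.edgeSet_fromEdgeSet]
    exact ⟨by exact_mod_cast hpT e he, Γ.not_isDiag_of_mem_edgeSet (p.edges_subset_edgeSet he)⟩
  have hqe : ∀ e ∈ q.edges, e ∈ (SimpleGraph.fromEdgeSet (T : Set (Sym2 V))).edgeSet := by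
    intro e he
    rw [SimpleGraph.edgeSet_fromEdgeSet]
    exact ⟨by exact_mod_cast hqT e he, Γ.not_isDiag_of_mem_edgeSet (q.edges_subset_edgeSet he)⟩
  have huniq := SimpleGraph.isAcyclic_iff_path_unique.mp hac
    ⟨p.transfer _ hpe, hp.transfer hpe⟩ ⟨q.transfer _ hqe, hq.transfer hqe⟩
  have hweq : p.transfer _ hpe = q.transfer _ hqe := congrArg Subtype.val huniq
  have heq := congrArg SimpleGraph.Walk.edges hweq
  rw [SimpleGraph.Walk.edges_transfer, SimpleGraph.Walk.edges_transfer] at heq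
  rw [heq]

end Helpers

/-- **Dirichlet matroids with two boundary nodes are graphic**: if `|B| = 2`
with boundary nodes `b₁ ≠ b₂`, then the bijection `Ē → E(Γ̂)` fixing `E` and
sending `ê` to the new edge `ē = b₁b₂` identifies `M(N)` with the graphic
matroid of `Γ̂`: `X ⊆ Ē` is independent in `M(N)` iff its image is the edge set
of a forest in `Γ̂`. -/
theorem card_two_boundary_graphic
    (Γ : SimpleGraph V) (B : Finset V) (hN : IsNetwork Γ B) (hB : B.card = 2)
    (b₁ b₂ : V) (hb₁ : b₁ ∈ B) (hb₂ : b₂ ∈ B) (hne : b₁ ≠ b₂)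
    (X : Finset (Option (Sym2 V))) (hX : X ⊆ ground Γ) :
    Indep Γ B X ↔
      IndepG (hatGraph Γ B) (X.image (fun o => o.elim s(b₁, b₂) id)) := by
  classical
  have hcard2 : ({b₁, b₂} : Finset V).card = 2 := by
    rw [Finset.card_insert_of_notMem (by simp [hne]), Finset.card_singleton]
  have hBeq : B = {b₁, b₂} := by
    refine (Finset.eq_of_subset_of_card_le ?_ (by rw [hB, hcard2])).symm
    intro x hx
    rcases Finset.mem_insert.mp hx with rfl | hx
    · exact hb₁
    · rw [Finset.mem_singleton] at hx; subst hx; exact hb₂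
  set ebar : Sym2 V := s(b₁, b₂) with hebardef
  have hebarΓ : ebar ∉ Γ.edgeSet := fun h =>
    hN.boundary_independent b₁ hb₁ b₂ hb₂ (Γ.mem_edgeSet.mp h)
  have hhatE : (hatGraph Γ B).edgeSet = insert ebar Γ.edgeSet := by
    ext e
    induction e using Sym2.ind with
    | _ x y =>
      rw [SimpleGraph.mem_edgeSet]
      show (Γ.Adj x y ∨ (x ∈ B ∧ y ∈ B ∧ x ≠ y)) ↔ _
      rw [Set.mem_insert_iff, SimpleGraph.mem_edgeSet]
      constructor
      · rintro (h | ⟨hx, hy, hxy⟩)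
        · exact Or.inr h
        · left
          rw [hBeq] at hx hy
          simp only [Finset.mem_insert, Finset.mem_singleton] at hx hy
          rcases hx with rfl | rfl <;> rcases hy with rfl | rfl
          · exact absurd rfl hxy
          · rfl
          · exact Sym2.eq_swap
          · exact absurd rfl hxy
      · rintro (h | h)
        · rw [hebardef, Sym2.eq_iff] at h
          rcases h with ⟨rfl, rfl⟩ | ⟨rfl, rfl⟩
          · exact Or.inr ⟨hb₁, hb₂, hne⟩
          · exact Or.inr ⟨hb₂, hb₁, hne.symm⟩
        · exact Or.inl h
  set Y : Finset (Sym2 V) := X.image (fun o => o.elim s(b₁, b₂) id) with hYdef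
  have hsomeY : ∀ e, some e ∈ X → e ∈ Y :=
    fun e he => Finset.mem_image.mpr ⟨some e, he, rfl⟩
  have hnoneY : none ∈ X → ebar ∈ Y :=
    fun h => Finset.mem_image.mpr ⟨none, h, rfl⟩
  have hground : ∀ e, some e ∈ X → e ∈ Γ.edgeSet := by
    intro e he
    have h1 := hX he
    rw [ground] at h1
    rcases Finset.mem_insert.mp h1 with h | h
    · exact absurd h (by simp)
    · obtain ⟨f, hf, hfe⟩ := Finset.mem_image.mp h
      obtain rfl : f = e := Option.some.inj hfe
      exact (Finset.mem_filter.mp hf).2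
  have hYmem : ∀ e ∈ Y, (some e ∈ X ∧ e ∈ Γ.edgeSet) ∨ (e = ebar ∧ none ∈ X) := by
    intro e he
    obtain ⟨o, ho, hoe⟩ := Finset.mem_image.mp he
    cases o with
    | none =>
      right
      refine ⟨?_, ho⟩
      rw [← hoe]; rfl
    | some f =>
      left
      have hfe : f = e := hoe
      subst hfe
      exact ⟨ho, hground _ ho⟩
  constructor
  · rintro (⟨F, ⟨hgrove, -⟩, hsub⟩ | ⟨F, ⟨hgrove, hnocross⟩, hsub⟩)
    · -- Σ₁ case: the image is a subset of the forest `F`.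
      have hYF : Y ⊆ F := by
        intro e he
        obtain ⟨o, ho, hoe⟩ := Finset.mem_image.mp he
        obtain ⟨f, hf, hfo⟩ := Finset.mem_image.mp (hsub ho)
        subst hfo
        have hfe : f = e := hoe
        subst hfe
        exact hf
      constructor
      · intro e he
        have h1 := hgrove.1 (Finset.mem_coe.mpr (hYF (Finset.mem_coe.mp he)))
        rw [hhatE]
        exact Set.mem_insert_of_mem _ h1
      · exact acyclic_mono' (Finset.coe_subset.mpr hYF) hgrove.2.1
    · -- Σ₀ case: the image is a subset of `insert ebar F`, which is acyclic.
      have hYF : Y ⊆ insert ebar F := by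
        intro e he
        obtain ⟨o, ho, hoe⟩ := Finset.mem_image.mp he
        rcases Finset.mem_insert.mp (hsub ho) with rfl | hoF
        · rw [← hoe]; exact Finset.mem_insert_self _ _
        · obtain ⟨f, hf, hfo⟩ := Finset.mem_image.mp hoF
          subst hfo
          have hfe : f = e := hoe
          subst hfe
          exact Finset.mem_insert_of_mem hf
      have hnr : ¬ (SimpleGraph.fromEdgeSet (F : Set (Sym2 V))).Reachable b₁ b₂ := by
        intro hr
        obtain ⟨C, hC, hCF⟩ := crossing_of_reachable' hBeq hne hb₁ hb₂ hgrove.1 hr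
        exact hnocross C hC hCF
      have hins : (SimpleGraph.fromEdgeSet
          ((insert ebar F : Finset (Sym2 V)) : Set (Sym2 V))).IsAcyclic := by
        rw [Finset.coe_insert]
        exact acyclic_insert' hgrove.2.1 hnr
      constructor
      · intro e he
        rcases Finset.mem_insert.mp (hYF (Finset.mem_coe.mp he)) with rfl | h
        · rw [hhatE]; exact Set.mem_insert _ _
        · rw [hhatE]; exact Set.mem_insert_of_mem _ (hgrove.1 h)
      · exact acyclic_mono' (Finset.coe_subset.mpr hYF) hins
  · rintro ⟨hYE, hYac⟩
    by_cases hnX : none ∈ X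
    · -- construct a grove in Σ₀
      have hebarY : ebar ∈ Y := hnoneY hnX
      obtain ⟨T, hYT, hTE, hTac, hTmax⟩ :=
        exists_maximal_acyclic' (hatGraph Γ B) Y hYE hYac
      have hhatconn : (hatGraph Γ B).Preconnected := fun u v =>
        (hN.connected.preconnected u v).mono (fun a b h => Or.inl h)
      have hreach := maximal_acyclic_reachable' hhatconn hTac hTmax
      have hebarT : ebar ∈ T := hYT hebarY
      set F : Finset (Sym2 V) := T.erase ebar with hFdef
      have hFT : (F : Set (Sym2 V)) ⊆ (T : Set (Sym2 V)) :=
        Finset.coe_subset.mpr (Finset.erase_subset _ _)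
      have hFΓ : (F : Set (Sym2 V)) ⊆ Γ.edgeSet := by
        intro e he
        have h1 : e ∈ T.erase ebar := Finset.mem_coe.mp he
        have h2 := hTE (Finset.mem_coe.mpr (Finset.mem_of_mem_erase h1))
        rw [hhatE] at h2
        rcases h2 with rfl | h2
        · exact absurd rfl (Finset.ne_of_mem_erase h1)
        · exact h2
      have hFac := acyclic_mono' hFT hTac
      have hnr : ¬ (SimpleGraph.fromEdgeSet (F : Set (Sym2 V))).Reachable b₁ b₂ := by
        intro hr
        have hadj : (SimpleGraph.fromEdgeSet (T : Set (Sym2 V))).Adj b₁ b₂ :=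
          (SimpleGraph.fromEdgeSet_adj _).mpr ⟨Finset.mem_coe.mpr hebarT, hne⟩
        have hle : SimpleGraph.fromEdgeSet (F : Set (Sym2 V)) ≤
            (SimpleGraph.fromEdgeSet (T : Set (Sym2 V))).deleteEdges {ebar} := by
          intro x y hxy
          rw [SimpleGraph.fromEdgeSet_adj] at hxy
          obtain ⟨hmem, hxyne⟩ := hxy
          rw [SimpleGraph.deleteEdges_adj, SimpleGraph.fromEdgeSet_adj]
          refine ⟨⟨hFT hmem, hxyne⟩, ?_⟩
          rintro hsing
          exact Finset.ne_of_mem_erase (Finset.mem_coe.mp hmem) hsing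
        obtain ⟨u, c, hc, -⟩ :=
          SimpleGraph.adj_and_reachable_delete_edges_iff_exists_cycle.mp ⟨hadj, hr.mono hle⟩
        exact hTac c hc
      have hreachB : ∀ v : V, ∃ b ∈ B,
          (SimpleGraph.fromEdgeSet (F : Set (Sym2 V))).Reachable v b := by
        intro v
        obtain ⟨w⟩ := hreach v b₁
        obtain ⟨p, hp⟩ := w.toPath
        by_cases hep : ebar ∈ p.edges
        · obtain ⟨r, hr2, her⟩ :
              ∃ r : (SimpleGraph.fromEdgeSet (T : Set (Sym2 V))).Walk b₁ v,
                r.IsPath ∧ ebar ∈ r.edges :=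
            ⟨p.reverse, hp.reverse,
              (by simpa [SimpleGraph.Walk.edges_reverse] using hep)⟩
          clear hep hp
          cases r with
          | nil => simp at her
          | @cons _ x _ hadj q =>
            rw [SimpleGraph.Walk.edges_cons, List.mem_cons] at her
            rw [SimpleGraph.Walk.cons_isPath_iff] at hr2
            obtain ⟨hqpath, hb₁q⟩ := hr2
            rcases her with heq | hqe
            · have hx : b₂ = x := Sym2.congr_right.mp heq
              subst hx
              have hqebar : ebar ∉ q.edges := by
                intro h
                exact hb₁q (q.fst_mem_support_of_mem_edges h)
              have hed : ∀ e ∈ q.edges,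
                  e ∈ (SimpleGraph.fromEdgeSet (F : Set (Sym2 V))).edgeSet := by
                intro e he
                have h1 := q.edges_subset_edgeSet he
                rw [SimpleGraph.edgeSet_fromEdgeSet] at h1 ⊢
                refine ⟨Finset.mem_coe.mpr (Finset.mem_erase.mpr
                  ⟨?_, Finset.mem_coe.mp h1.1⟩), h1.2⟩
                rintro rfl
                exact hqebar he
              exact ⟨b₂, hb₂, (q.transfer _ hed).reachable.symm⟩
            · exact absurd (q.fst_mem_support_of_mem_edges hqe) hb₁q
        · refine ⟨b₁, hb₁, ?_⟩
          have hed : ∀ e ∈ p.edges,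
              e ∈ (SimpleGraph.fromEdgeSet (F : Set (Sym2 V))).edgeSet := by
            intro e he
            have h1 := p.edges_subset_edgeSet he
            rw [SimpleGraph.edgeSet_fromEdgeSet] at h1 ⊢
            refine ⟨Finset.mem_coe.mpr (Finset.mem_erase.mpr
              ⟨?_, Finset.mem_coe.mp h1.1⟩), h1.2⟩
            rintro rfl
            exact hep he
          exact (p.transfer _ hed).reachable
      have hgrove : IsGrove Γ B F := by
        refine ⟨hFΓ, hFac, ?_, hreachB⟩
        intro v hvB
        obtain ⟨b, hbB, hrvb⟩ := hreachB v
        exact exists_incident' (fun h => hvB (h ▸ hbB)) hrvb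
      have hnocross : ∀ C : Finset (Sym2 V), IsCrossing Γ B C → ¬ C ⊆ F := by
        intro C hC hCF
        obtain ⟨p, hp, rfl⟩ := crossing_edges' hBeq hC
        have hed : ∀ e ∈ p.edges,
            e ∈ (SimpleGraph.fromEdgeSet (F : Set (Sym2 V))).edgeSet := by
          intro e he
          rw [SimpleGraph.edgeSet_fromEdgeSet]
          exact ⟨Finset.mem_coe.mpr (hCF (List.mem_toFinset.mpr he)),
            Γ.not_isDiag_of_mem_edgeSet (p.edges_subset_edgeSet he)⟩
        exact hnr (p.transfer _ hed).reachable
      refine Or.inr ⟨F, ⟨hgrove, hnocross⟩, ?_⟩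
      intro o ho
      cases o with
      | none => exact Finset.mem_insert_self _ _
      | some e =>
        have heY : e ∈ Y := hsomeY e ho
        have heT : e ∈ T := hYT heY
        have heΓ : e ∈ Γ.edgeSet := hground e ho
        have heebar : e ≠ ebar := fun h => hebarΓ (h ▸ heΓ)
        exact Finset.mem_insert_of_mem
          (Finset.mem_image.mpr ⟨e, Finset.mem_erase.mpr ⟨heebar, heT⟩, rfl⟩)
    · -- construct a grove in Σ₁
      have hYΓ : (Y : Set (Sym2 V)) ⊆ Γ.edgeSet := by
        intro e he
        rcases hYmem e (Finset.mem_coe.mp he) with ⟨-, h⟩ | ⟨-, h⟩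
        · exact h
        · exact absurd h hnX
      obtain ⟨T, hYT, hTE, hTac, hTmax⟩ := exists_maximal_acyclic' Γ Y hYΓ hYac
      have hreach := maximal_acyclic_reachable' hN.connected.preconnected hTac hTmax
      have hgrove : IsGrove Γ B T := by
        refine ⟨hTE, hTac, ?_, fun v => ⟨b₁, hb₁, hreach v b₁⟩⟩
        intro v hvB
        exact exists_incident' (fun h => hvB (h ▸ hb₁)) (hreach v b₁)
      obtain ⟨C₀, hC₀, hC₀T⟩ :=
        crossing_of_reachable' hBeq hne hb₁ hb₂ hTE (hreach b₁ b₂)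
      refine Or.inl ⟨T, ⟨hgrove, C₀, ⟨hC₀, hC₀T⟩, ?_⟩, ?_⟩
      · rintro C ⟨hC, hCT⟩
        obtain ⟨p, hp, rfl⟩ := crossing_edges' hBeq hC
        obtain ⟨q, hq, rfl⟩ := crossing_edges' hBeq hC₀
        exact path_edges_unique' hTac hp hq
          (fun e he => hCT (List.mem_toFinset.mpr he))
          (fun e he => hC₀T (List.mem_toFinset.mpr he))
      · intro o ho
        cases o with
        | none => exact absurd ho hnX
        | some e =>
          exact Finset.mem_image.mpr ⟨e, hYT (hsomeY e ho), rfl⟩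
end DirichletPaper
end
end
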